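/- Let D(X), D(Y) ∈ ℝ^{N×N_d} have full column rank and suppose S* ⊆ ℝ^{N_d} is the maximal subspace satisfying D(X)·S* = D(Y)·S* (image subspaces in ℝ^N). Then for a full column rank matrix C with range(C) = S*, there is a unique invertible K with D(Y)C = D(X)CK, and a vector v ∈ ℂ^{N_d} satisfies D(Y)v = λ·D(X)v for some λ ∈ ℂ if and only if v = C·w for some eigenvector w of K with eigenvalue λ. -/

import Mathlib

open Matrix Complex

/-- real part of complexified mulVec -/
lemma mulVec_map_re' {m n : ℕ} (M : Matrix (Fin m) (Fin n) ℝ) (v : Fin n → ℂ) (i : Fin m) :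
    ((M.map (Complex.ofReal : ℝ → ℂ)).mulVec v i).re = M.mulVec (fun j => (v j).re) i := by
  simp [Matrix.mulVec, dotProduct, Complex.re_sum, Complex.mul_re]

lemma mulVec_map_im' {m n : ℕ} (M : Matrix (Fin m) (Fin n) ℝ) (v : Fin n → ℂ) (i : Fin m) :
    ((M.map (Complex.ofReal : ℝ → ℂ)).mulVec v i).im = M.mulVec (fun j => (v j).im) i := by
  simp [Matrix.mulVec, dotProduct, Complex.im_sum, Complex.mul_im]

lemma mulVec_map_ofReal {m n : ℕ} (M : Matrix (Fin m) (Fin n) ℝ) (v : Fin n → ℝ) :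
    (M.map (Complex.ofReal : ℝ → ℂ)).mulVec (fun j => (v j : ℂ)) =
      fun i => ((M.mulVec v i : ℝ) : ℂ) := by
  funext i
  apply Complex.ext
  · rw [mulVec_map_re']
    have : (fun j => ((v j : ℂ)).re) = v := by funext j; simp
    rw [this]; simp
  · rw [mulVec_map_im']
    have : (fun j => ((v j : ℂ)).im) = (0 : Fin n → ℝ) := by funext j; simp
    rw [this, Matrix.mulVec_zero]; simp

lemma map_mulVec_inj {m n : ℕ} (M : Matrix (Fin m) (Fin n) ℝ)
    (hM : Function.Injective M.mulVecLin) :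
    Function.Injective (M.map (Complex.ofReal : ℝ → ℂ)).mulVec := by
  have h0 : ∀ v, (M.map (Complex.ofReal : ℝ → ℂ)).mulVec v = 0 → v = 0 := by
    intro v hv
    have hre : M.mulVecLin (fun j => (v j).re) = 0 := by
      funext i
      have := congrFun hv i
      have := congrArg Complex.re this
      rw [mulVec_map_re'] at this
      simpa [Matrix.mulVecLin] using this
    have him : M.mulVecLin (fun j => (v j).im) = 0 := by
      funext i
      have := congrFun hv i
      have := congrArg Complex.im this
      rw [mulVec_map_im'] at this
      simpa [Matrix.mulVecLin] using this
    have h1 : (fun j => (v j).re) = (0 : Fin n → ℝ) := by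
      apply hM; simpa using hre
    have h2 : (fun j => (v j).im) = (0 : Fin n → ℝ) := by
      apply hM; simpa using him
    funext j
    exact Complex.ext (by simpa using congrFun h1 j) (by simpa using congrFun h2 j)
  intro a b hab
  have : (M.map (Complex.ofReal : ℝ → ℂ)).mulVec (a - b) = 0 := by
    rw [Matrix.mulVec_sub, hab, sub_self]
  have := h0 _ this
  exact sub_eq_zero.mp this

theorem stmt_18 (N Nd k : ℕ)
    (DX DY : Matrix (Fin N) (Fin Nd) ℝ)
    (hX : Function.Injective DX.mulVecLin) (hY : Function.Injective DY.mulVecLin)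
    (Sstar : Submodule ℝ (Fin Nd → ℝ))
    (hsym : Submodule.map DX.mulVecLin Sstar = Submodule.map DY.mulVecLin Sstar)
    (hmax : ∀ S : Submodule ℝ (Fin Nd → ℝ),
      Submodule.map DX.mulVecLin S = Submodule.map DY.mulVecLin S → S ≤ Sstar)
    (C : Matrix (Fin Nd) (Fin k) ℝ) (hC : Function.Injective C.mulVecLin)
    (hCr : LinearMap.range C.mulVecLin = Sstar) :
    (∃! K : Matrix (Fin k) (Fin k) ℝ, IsUnit K ∧ DY * C = DX * C * K) ∧
    ∀ K : Matrix (Fin k) (Fin k) ℝ, IsUnit K → DY * C = DX * C * K →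
      ∀ (lam : ℂ) (v : Fin Nd → ℂ), v ≠ 0 →
        ((DY.map (Complex.ofReal : ℝ → ℂ)).mulVec v
            = lam • (DX.map (Complex.ofReal : ℝ → ℂ)).mulVec v ↔
          ∃ w : Fin k → ℂ, w ≠ 0 ∧
            (K.map (Complex.ofReal : ℝ → ℂ)).mulVec w = lam • w ∧
            v = (C.map (Complex.ofReal : ℝ → ℂ)).mulVec w) := by
  -- notations
  set A : (Fin k → ℝ) →ₗ[ℝ] (Fin N → ℝ) := (DX * C).mulVecLin with hA_def
  set B : (Fin k → ℝ) →ₗ[ℝ] (Fin N → ℝ) := (DY * C).mulVecLin with hB_def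
  have hAc : A = DX.mulVecLin ∘ₗ C.mulVecLin := by rw [hA_def, Matrix.mulVecLin_mul]
  have hBc : B = DY.mulVecLin ∘ₗ C.mulVecLin := by rw [hB_def, Matrix.mulVecLin_mul]
  have hAinj : Function.Injective A := by
    rw [hAc]; exact hX.comp hC
  have hBinj : Function.Injective B := by
    rw [hBc]; exact hY.comp hC
  have hrange : LinearMap.range B = LinearMap.range A := by
    rw [hAc, hBc, LinearMap.range_comp, LinearMap.range_comp, hCr, hsym]
  -- build the equivalence L with A ∘ L = B
  let eA := LinearEquiv.ofInjective A hAinj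
  let eB := LinearEquiv.ofInjective B hBinj
  let L : (Fin k → ℝ) ≃ₗ[ℝ] (Fin k → ℝ) :=
    eB.trans ((LinearEquiv.ofEq _ _ hrange).trans eA.symm)
  have hAL : ∀ w, A (L w) = B w := by
    intro w
    have h2 : eA (L w) = (LinearEquiv.ofEq _ _ hrange) (eB w) :=
      eA.apply_symm_apply _
    have h1 : (eA (L w) : Fin N → ℝ) = A (L w) := by
      simp [eA, LinearEquiv.ofInjective_apply]
    rw [← h1, h2]
    simp [eB, LinearEquiv.ofInjective_apply]
  set K₀ : Matrix (Fin k) (Fin k) ℝ := LinearMap.toMatrix' (L : (Fin k → ℝ) →ₗ[ℝ] (Fin k → ℝ))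
    with hK₀_def
  have hK₀mul : A ∘ₗ K₀.mulVecLin = B := by
    apply LinearMap.ext; intro w
    have : K₀.mulVecLin w = L w := by
      rw [hK₀_def]
      simp [← Matrix.toLin'_apply', Matrix.toLin'_toMatrix']
    simp only [LinearMap.comp_apply, this]
    exact hAL w
  have hK₀unit : IsUnit K₀ := by
    have hmul : K₀ * LinearMap.toMatrix' (L.symm : (Fin k → ℝ) →ₗ[ℝ] (Fin k → ℝ)) = 1 := by
      rw [hK₀_def, ← LinearMap.toMatrix'_comp]
      have : (L : (Fin k → ℝ) →ₗ[ℝ] (Fin k → ℝ)) ∘ₗ (L.symm : (Fin k → ℝ) →ₗ[ℝ] (Fin k → ℝ))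
          = LinearMap.id := by
        apply LinearMap.ext; intro x; simp
      rw [this, LinearMap.toMatrix'_id]
    have hdet : IsUnit K₀.det :=
      IsUnit.of_mul_eq_one _ (by rw [← Matrix.det_mul, hmul, Matrix.det_one])
    exact (Matrix.isUnit_iff_isUnit_det K₀).mpr hdet
  have hK₀eq : DY * C = DX * C * K₀ := by
    have : ((DX * C) * K₀).mulVecLin = (DY * C).mulVecLin := by
      rw [Matrix.mulVecLin_mul]; exact hK₀mul
    have := Matrix.toLin'.injective
      (by rw [Matrix.toLin'_apply', Matrix.toLin'_apply', this] :
        Matrix.toLin' ((DX * C) * K₀) = Matrix.toLin' (DY * C))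
    exact this.symm
  have huniq : ∀ K : Matrix (Fin k) (Fin k) ℝ, DY * C = DX * C * K → K = K₀ := by
    intro K hK
    have h1 : (DX * C * K).mulVecLin = (DX * C * K₀).mulVecLin := by
      rw [← hK, ← hK₀eq]
    rw [Matrix.mulVecLin_mul (DX * C) K, Matrix.mulVecLin_mul (DX * C) K₀] at h1
    have h2 : K.mulVecLin = K₀.mulVecLin := by
      apply LinearMap.ext; intro w
      exact hAinj (LinearMap.congr_fun h1 w)
    exact Matrix.toLin'.injective
      (by rw [Matrix.toLin'_apply', Matrix.toLin'_apply', h2])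
  constructor
  · exact ⟨K₀, ⟨hK₀unit, hK₀eq⟩, fun K hK => huniq K hK.2⟩
  · intro K _hKunit hKeq lam v hv
    have hDXC : ((DX * C).map (Complex.ofReal : ℝ → ℂ))
        = DX.map (Complex.ofReal : ℝ → ℂ) * C.map (Complex.ofReal : ℝ → ℂ) :=
      Matrix.map_mul (f := Complex.ofRealHom)
    have hDYC : ((DY * C).map (Complex.ofReal : ℝ → ℂ))
        = DY.map (Complex.ofReal : ℝ → ℂ) * C.map (Complex.ofReal : ℝ → ℂ) :=
      Matrix.map_mul (f := Complex.ofRealHom)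
    have hKmap : ((DX * C * K).map (Complex.ofReal : ℝ → ℂ))
        = (DX * C).map (Complex.ofReal : ℝ → ℂ) * K.map (Complex.ofReal : ℝ → ℂ) :=
      Matrix.map_mul (f := Complex.ofRealHom)
    constructor
    · -- forward: v is in complexified range of C
      intro heig
      set a : Fin Nd → ℝ := fun j => (v j).re with ha_def
      set b : Fin Nd → ℝ := fun j => (v j).im with hb_def
      -- real and imaginary parts of the eigenvalue equation
      have h1 : DY.mulVec a = lam.re • DX.mulVec a - lam.im • DX.mulVec b := by
        funext i
        have := congrArg Complex.re (congrFun heig i)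
        rw [mulVec_map_re'] at this
        simp only [Pi.smul_apply, smul_eq_mul, Complex.mul_re] at this
        rw [mulVec_map_re' DX v i, mulVec_map_im' DX v i] at this
        simpa [ha_def, hb_def, smul_eq_mul] using this
      have h2 : DY.mulVec b = lam.re • DX.mulVec b + lam.im • DX.mulVec a := by
        funext i
        have := congrArg Complex.im (congrFun heig i)
        rw [mulVec_map_im'] at this
        simp only [Pi.smul_apply, smul_eq_mul, Complex.mul_im] at this
        rw [mulVec_map_re' DX v i, mulVec_map_im' DX v i] at this
        simp only [ha_def, hb_def, Pi.add_apply, Pi.smul_apply, smul_eq_mul] at this ⊢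
        rw [this]
      -- the span of a, b is a symmetric subspace
      set S : Submodule ℝ (Fin Nd → ℝ) := Submodule.span ℝ {a, b} with hS_def
      have hmapX : Submodule.map DX.mulVecLin S
          = Submodule.span ℝ {DX.mulVec a, DX.mulVec b} := by
        rw [hS_def, Submodule.map_span]
        congr 1
        simp [Set.image_insert_eq]
      have hmapY : Submodule.map DY.mulVecLin S
          = Submodule.span ℝ {DY.mulVec a, DY.mulVec b} := by
        rw [hS_def, Submodule.map_span]
        congr 1
        simp [Set.image_insert_eq]
      have hle : Submodule.map DY.mulVecLin S ≤ Submodule.map DX.mulVecLin S := by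
        rw [hmapX, hmapY, Submodule.span_le]
        intro x hx
        rcases hx with rfl | hx
        · rw [h1]
          exact Submodule.sub_mem _
            (Submodule.smul_mem _ _ (Submodule.subset_span (Set.mem_insert _ _)))
            (Submodule.smul_mem _ _ (Submodule.subset_span (Set.mem_insert_of_mem _ rfl)))
        · rcases hx with rfl
          rw [h2]
          exact Submodule.add_mem _
            (Submodule.smul_mem _ _ (Submodule.subset_span (Set.mem_insert_of_mem _ rfl)))
            (Submodule.smul_mem _ _ (Submodule.subset_span (Set.mem_insert _ _)))
      have hfr : Module.finrank ℝ (Submodule.map DX.mulVecLin S)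
          = Module.finrank ℝ (Submodule.map DY.mulVecLin S) := by
        rw [← LinearEquiv.finrank_eq (Submodule.equivMapOfInjective DX.mulVecLin hX S),
          ← LinearEquiv.finrank_eq (Submodule.equivMapOfInjective DY.mulVecLin hY S)]
      have hSsym : Submodule.map DX.mulVecLin S = Submodule.map DY.mulVecLin S :=
        (Submodule.eq_of_le_of_finrank_le hle hfr.le).symm
      have hSle : S ≤ Sstar := hmax S hSsym
      have ha_mem : a ∈ LinearMap.range C.mulVecLin := by
        rw [hCr]; exact hSle (Submodule.subset_span (Set.mem_insert _ _))
      have hb_mem : b ∈ LinearMap.range C.mulVecLin := by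
        rw [hCr]; exact hSle (Submodule.subset_span (Set.mem_insert_of_mem _ rfl))
      obtain ⟨p, hp⟩ := ha_mem
      obtain ⟨q, hq⟩ := hb_mem
      set w : Fin k → ℂ := fun j => ⟨p j, q j⟩ with hw_def
      have hvw : v = (C.map (Complex.ofReal : ℝ → ℂ)).mulVec w := by
        funext i
        apply Complex.ext
        · rw [mulVec_map_re']
          have : (fun j => (w j).re) = p := by funext j; simp [hw_def]
          rw [this]
          have := congrFun hp i
          simpa [Matrix.mulVecLin, ha_def] using this.symm
        · rw [mulVec_map_im']
          have : (fun j => (w j).im) = q := by funext j; simp [hw_def]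
          rw [this]
          have := congrFun hq i
          simpa [Matrix.mulVecLin, hb_def] using this.symm
      have hw0 : w ≠ 0 := by
        intro h
        apply hv
        rw [hvw, h, Matrix.mulVec_zero]
      refine ⟨w, hw0, ?_, hvw⟩
      -- eigenvector equation for K, using injectivity of complexified DX * C
      have hAinjC : Function.Injective ((DX * C).map (Complex.ofReal : ℝ → ℂ)).mulVec := by
        have : Function.Injective (DX * C).mulVecLin := by
          rw [Matrix.mulVecLin_mul]; exact hX.comp hC
        exact map_mulVec_inj _ this
      apply hAinjC
      calc ((DX * C).map (Complex.ofReal : ℝ → ℂ)).mulVec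
            ((K.map (Complex.ofReal : ℝ → ℂ)).mulVec w)
          = ((DX * C * K).map (Complex.ofReal : ℝ → ℂ)).mulVec w := by
            rw [hKmap, Matrix.mulVec_mulVec]
        _ = ((DY * C).map (Complex.ofReal : ℝ → ℂ)).mulVec w := by rw [← hKeq]
        _ = (DY.map (Complex.ofReal : ℝ → ℂ)).mulVec
              ((C.map (Complex.ofReal : ℝ → ℂ)).mulVec w) := by
            rw [hDYC, Matrix.mulVec_mulVec]
        _ = (DY.map (Complex.ofReal : ℝ → ℂ)).mulVec v := by rw [← hvw]
        _ = lam • (DX.map (Complex.ofReal : ℝ → ℂ)).mulVec v := heig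
        _ = lam • ((DX * C).map (Complex.ofReal : ℝ → ℂ)).mulVec w := by
            rw [hvw, hDXC, Matrix.mulVec_mulVec]
        _ = ((DX * C).map (Complex.ofReal : ℝ → ℂ)).mulVec (lam • w) := by
            rw [Matrix.mulVec_smul]
    · -- backward
      rintro ⟨w, hw0, hKw, rfl⟩
      calc (DY.map (Complex.ofReal : ℝ → ℂ)).mulVec ((C.map (Complex.ofReal : ℝ → ℂ)).mulVec w)
          = ((DY * C).map (Complex.ofReal : ℝ → ℂ)).mulVec w := by
            rw [hDYC, Matrix.mulVec_mulVec]
        _ = ((DX * C).map (Complex.ofReal : ℝ → ℂ)).mulVec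
              ((K.map (Complex.ofReal : ℝ → ℂ)).mulVec w) := by
            rw [hKeq, hKmap, Matrix.mulVec_mulVec]
        _ = ((DX * C).map (Complex.ofReal : ℝ → ℂ)).mulVec (lam • w) := by rw [hKw]
        _ = lam • (DX.map (Complex.ofReal : ℝ → ℂ)).mulVec
              ((C.map (Complex.ofReal : ℝ → ℂ)).mulVec w) := by
            rw [Matrix.mulVec_smul, hDXC, Matrix.mulVec_mulVec]
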